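/- Let B_1, …, B_N be N orthonormal bases of the d-dimensional complex Hilbert space ℂ^d (each B_m = (|i_m⟩)_{i=1}^{d}) that are pairwise mutually unbiased: |⟨i_m, j_n⟩|² = 1/d for all m ≠ n and all i, j. Then for every unit vector ψ, with p_m(i) = |⟨i_m, ψ⟩|², the average fidelity-based disturbance satisfies (1/N) Σ_{m=1}^{N} (1 − Σ_{i=1}^{d} p_m(i)²) ≥ (1 − 1/N)(1 − 1/d). -/

import Mathlib

open Matrix

private lemma ip_outer {d : ℕ} (v w x y : Fin d → ℂ) :
    ∑ a, ∑ b, (starRingEnd ℂ) (v a * (starRingEnd ℂ) (w b)) * (x a * (starRingEnd ℂ) (y b))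
      = (∑ a, (starRingEnd ℂ) (v a) * x a) *
        (starRingEnd ℂ) (∑ b, (starRingEnd ℂ) (w b) * y b) := by
  rw [map_sum, Finset.sum_mul_sum]
  refine Finset.sum_congr rfl fun a _ => Finset.sum_congr rfl fun b _ => ?_
  simp only [_root_.map_mul, Complex.conj_conj]
  ring

private lemma ip_conj {d : ℕ} (X Y : Fin d → Fin d → ℂ) :
    ∑ a, ∑ b, (starRingEnd ℂ) (X a b) * Y a b
      = (starRingEnd ℂ) (∑ a, ∑ b, (starRingEnd ℂ) (Y a b) * X a b) := by
  simp only [map_sum, _root_.map_mul, Complex.conj_conj]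
  refine Finset.sum_congr rfl fun a _ => Finset.sum_congr rfl fun b _ => ?_
  ring

private lemma ip_sum_right {d : ℕ} {α : Type*} (s : Finset α) (X : Fin d → Fin d → ℂ)
    (f : α → Fin d → Fin d → ℂ) :
    ∑ a, ∑ b, (starRingEnd ℂ) (X a b) * (∑ t ∈ s, f t a b)
      = ∑ t ∈ s, ∑ a, ∑ b, (starRingEnd ℂ) (X a b) * f t a b := by
  simp only [Finset.mul_sum]
  have h : ∀ a : Fin d, ∑ b, ∑ t ∈ s, (starRingEnd ℂ) (X a b) * f t a b
      = ∑ t ∈ s, ∑ b, (starRingEnd ℂ) (X a b) * f t a b := fun a => Finset.sum_comm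
  simp only [h]
  exact Finset.sum_comm

private lemma ip_sum_left {d : ℕ} {α : Type*} (s : Finset α) (Y : Fin d → Fin d → ℂ)
    (f : α → Fin d → Fin d → ℂ) :
    ∑ a, ∑ b, (starRingEnd ℂ) (∑ t ∈ s, f t a b) * Y a b
      = ∑ t ∈ s, ∑ a, ∑ b, (starRingEnd ℂ) (f t a b) * Y a b := by
  simp only [map_sum, Finset.sum_mul]
  have h : ∀ a : Fin d, ∑ b, ∑ t ∈ s, (starRingEnd ℂ) (f t a b) * Y a b
      = ∑ t ∈ s, ∑ b, (starRingEnd ℂ) (f t a b) * Y a b := fun a => Finset.sum_comm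
  simp only [h]
  exact Finset.sum_comm

private lemma ip_const_right {d : ℕ} (X Y : Fin d → Fin d → ℂ) (k : ℂ) :
    ∑ a, ∑ b, (starRingEnd ℂ) (X a b) * (k * Y a b)
      = k * ∑ a, ∑ b, (starRingEnd ℂ) (X a b) * Y a b := by
  simp only [Finset.mul_sum]
  exact Finset.sum_congr rfl fun a _ => Finset.sum_congr rfl fun b _ => by ring

private lemma ip_const_left {d : ℕ} (X Y : Fin d → Fin d → ℂ) (k : ℝ) :
    ∑ a, ∑ b, (starRingEnd ℂ) ((k : ℂ) * X a b) * Y a b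
      = (k : ℂ) * ∑ a, ∑ b, (starRingEnd ℂ) (X a b) * Y a b := by
  simp only [_root_.map_mul, Complex.conj_ofReal, Finset.mul_sum]
  exact Finset.sum_congr rfl fun a _ => Finset.sum_congr rfl fun b _ => by ring


/-- For `N ≥ 1` pairwise mutually unbiased orthonormal bases
`B 1, …, B N` of `ℂ^d` and any unit vector `ψ`, with outcome probabilities
`p_m(i) = |⟨i_m, ψ⟩|²`, the average fidelity-based disturbance satisfies
`(1/N) ∑ m (1 - ∑ i p_m(i)²) ≥ (1 - 1/N)(1 - 1/d)`. -/
theorem disturbance_tradeoff_mubs {d N : ℕ} (hN : 0 < N)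
    (B : Fin N → Fin d → (Fin d → ℂ))
    (hortho : ∀ m, ∀ i j, star (B m i) ⬝ᵥ B m j = if i = j then (1 : ℂ) else 0)
    (hmub : ∀ m n, m ≠ n → ∀ i j,
      ‖star (B m i) ⬝ᵥ B n j‖ ^ 2 = 1 / (d : ℝ))
    (ψ : Fin d → ℂ) (hψ : star ψ ⬝ᵥ ψ = 1) :
    (1 / (N : ℝ)) * ∑ m, (1 - ∑ i, (‖star (B m i) ⬝ᵥ ψ‖ ^ 2) ^ 2)
      ≥ (1 - 1 / (N : ℝ)) * (1 - 1 / (d : ℝ)) := by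
  classical
  have hd0 : d ≠ 0 := by
    rintro rfl
    simp [dotProduct] at hψ
  have hdR : (0:ℝ) < d := by exact_mod_cast Nat.pos_of_ne_zero hd0
  have hNR : (0:ℝ) < N := by exact_mod_cast hN
  have hdC : (d:ℂ) ≠ 0 := by exact_mod_cast hd0
  have hψ' : ∑ a, (starRingEnd ℂ) (ψ a) * ψ a = 1 := by
    simpa [dotProduct] using hψ
  have hortho' : ∀ m i j, ∑ a, (starRingEnd ℂ) (B m i a) * B m j a
      = if i = j then (1:ℂ) else 0 := by
    intro m i j
    simpa [dotProduct] using hortho m i j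
  -- completeness of each basis
  have hcomp : ∀ m a b, ∑ i, (starRingEnd ℂ) (B m i a) * B m i b
      = if a = b then (1:ℂ) else 0 := by
    intro m a b
    set V : Matrix (Fin d) (Fin d) ℂ := Matrix.of (B m) with hV
    have hVVh : V * Vᴴ = 1 := by
      ext i j
      simp only [Matrix.mul_apply, Matrix.conjTranspose_apply, Matrix.of_apply, hV,
        Matrix.one_apply, Matrix.star_apply, RCLike.star_def]
      rw [show (∑ x, B m i x * (starRingEnd ℂ) (B m j x))
          = ∑ x, (starRingEnd ℂ) (B m j x) * B m i x from
        Finset.sum_congr rfl fun x _ => mul_comm _ _, hortho' m j i]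
      by_cases h : i = j <;> simp [h, eq_comm]
    have hVhV : Vᴴ * V = 1 := mul_eq_one_comm.mp hVVh
    have := congrFun (congrFun hVhV a) b
    simpa [Matrix.mul_apply, Matrix.conjTranspose_apply, Matrix.of_apply, hV,
      Matrix.one_apply, Matrix.star_apply, RCLike.star_def] using this
  -- probabilities
  set p : Fin N → Fin d → ℝ := fun m i => ‖star (B m i) ⬝ᵥ ψ‖ ^ 2 with hpdef
  have hp_sum : ∀ m, ∑ i, p m i = 1 := by
    intro m
    have key : ∑ i, (star (B m i) ⬝ᵥ ψ) * (starRingEnd ℂ) (star (B m i) ⬝ᵥ ψ) = 1 := by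
      simp only [dotProduct, Pi.star_apply, map_sum, _root_.map_mul, Complex.conj_conj,
        RCLike.star_def]
      simp only [Finset.sum_mul_sum]
      rw [Finset.sum_comm]
      calc ∑ a, ∑ i, ∑ b, ((starRingEnd ℂ) (B m i a) * ψ a) * (B m i b * (starRingEnd ℂ) (ψ b))
          = ∑ a, ∑ b, (∑ i, (starRingEnd ℂ) (B m i a) * B m i b) * ((starRingEnd ℂ) (ψ b) * ψ a) := by
            refine Finset.sum_congr rfl fun a _ => ?_
            rw [Finset.sum_comm]
            refine Finset.sum_congr rfl fun b _ => ?_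
            rw [Finset.sum_mul]
            refine Finset.sum_congr rfl fun i _ => ?_
            ring
        _ = 1 := by
            simp only [hcomp]
            simp [Finset.sum_ite_eq, hψ']
    have hcast : ((∑ i, p m i : ℝ) : ℂ) = 1 := by
      push_cast
      rw [← key]
      refine Finset.sum_congr rfl fun i _ => ?_
      show ((‖star (B m i) ⬝ᵥ ψ‖ ^ 2 : ℝ) : ℂ) = _
      rw [Complex.sq_norm, ← Complex.mul_conj]
    exact_mod_cast hcast
  -- centered probabilities
  set c : Fin N → Fin d → ℝ := fun m i => p m i - 1 / d with hcdef
  have hc_sum : ∀ m, ∑ i, c m i = 0 := by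
    intro m
    simp only [hcdef, Finset.sum_sub_distrib, hp_sum, Finset.sum_const, Finset.card_univ,
      Fintype.card_fin, nsmul_eq_mul]
    field_simp
    norm_num
  -- the three matrices
  set ρm : Fin d → Fin d → ℂ := fun a b => ψ a * (starRingEnd ℂ) (ψ b) with hρdef
  set Em : Fin d → Fin d → ℂ := fun a b => if a = b then (1/(d:ℂ)) else 0 with hEdef
  set Qm : Fin d → Fin d → ℂ :=
    fun a b => ∑ m, ∑ i, ((c m i : ℝ) : ℂ) * (B m i a * (starRingEnd ℂ) (B m i b)) with hQdef
  -- inner products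
  have hIPrr : ∑ a, ∑ b, (starRingEnd ℂ) (ρm a b) * ρm a b = 1 := by
    simp only [hρdef]
    rw [ip_outer ψ ψ ψ ψ, hψ']
    simp
  have hIPrE : ∑ a, ∑ b, (starRingEnd ℂ) (ρm a b) * Em a b = 1/(d:ℂ) := by
    simp only [hρdef, hEdef, mul_ite, mul_zero, Finset.sum_ite_eq, Finset.mem_univ, if_true]
    simp only [_root_.map_mul, Complex.conj_conj]
    calc ∑ a, (starRingEnd ℂ) (ψ a) * ψ a * (1/(d:ℂ))
        = (∑ a, (starRingEnd ℂ) (ψ a) * ψ a) * (1/(d:ℂ)) := by rw [Finset.sum_mul]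
      _ = 1/(d:ℂ) := by rw [hψ']; ring
  have hIPEr : ∑ a, ∑ b, (starRingEnd ℂ) (Em a b) * ρm a b = 1/(d:ℂ) := by
    rw [ip_conj, hIPrE]
    simp [map_div₀]
  have hIPEE : ∑ a, ∑ b, (starRingEnd ℂ) (Em a b) * Em a b = 1/(d:ℂ) := by
    simp only [hEdef, apply_ite (starRingEnd ℂ), map_zero, map_div₀, _root_.map_one, map_natCast,
      ite_mul, zero_mul, mul_ite, mul_zero, Finset.sum_ite_eq, Finset.mem_univ, if_true]
    simp only [Finset.sum_const, Finset.card_univ, Fintype.card_fin, nsmul_eq_mul]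
    field_simp
  have hIPrP : ∀ m i, ∑ a, ∑ b, (starRingEnd ℂ) (ρm a b) *
      (B m i a * (starRingEnd ℂ) (B m i b)) = ((p m i : ℝ) : ℂ) := by
    intro m i
    simp only [hρdef]
    rw [ip_outer ψ ψ (B m i) (B m i)]
    have h1 : (starRingEnd ℂ) (∑ b, (starRingEnd ℂ) (ψ b) * B m i b) = star (B m i) ⬝ᵥ ψ := by
      simp only [map_sum, _root_.map_mul, Complex.conj_conj, dotProduct, Pi.star_apply,
        RCLike.star_def]
      exact Finset.sum_congr rfl fun b _ => mul_comm _ _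
    have h2 : (∑ a, (starRingEnd ℂ) (ψ a) * B m i a)
        = (starRingEnd ℂ) (star (B m i) ⬝ᵥ ψ) := by
      simp only [map_sum, _root_.map_mul, Complex.conj_conj, dotProduct, Pi.star_apply,
        RCLike.star_def]
      exact Finset.sum_congr rfl fun b _ => mul_comm _ _
    rw [h1, h2]
    show (starRingEnd ℂ) _ * _ = ((p m i : ℝ) : ℂ)
    rw [mul_comm, Complex.mul_conj]
    simp only [hpdef]
    show _ = ((‖star (B m i) ⬝ᵥ ψ‖ ^ 2 : ℝ) : ℂ)
    rw [Complex.sq_norm]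
  have hIPrQ : ∑ a, ∑ b, (starRingEnd ℂ) (ρm a b) * Qm a b
      = ((∑ m, ∑ i, c m i * p m i : ℝ) : ℂ) := by
    simp only [hQdef]
    rw [ip_sum_right]
    push_cast
    refine Finset.sum_congr rfl fun m _ => ?_
    rw [ip_sum_right]
    refine Finset.sum_congr rfl fun i _ => ?_
    rw [ip_const_right, hIPrP]
  have hIPQr : ∑ a, ∑ b, (starRingEnd ℂ) (Qm a b) * ρm a b
      = ((∑ m, ∑ i, c m i * p m i : ℝ) : ℂ) := by
    rw [ip_conj, hIPrQ, Complex.conj_ofReal]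
  have htrace : ∀ m i, ∑ a, B m i a * (starRingEnd ℂ) (B m i a) = 1 := by
    intro m i
    have := congrArg (starRingEnd ℂ) (hortho' m i i)
    simp only [map_sum, _root_.map_mul, Complex.conj_conj, if_true, _root_.map_one] at this
    rw [← this]
  have hIPEQ : ∑ a, ∑ b, (starRingEnd ℂ) (Em a b) * Qm a b = 0 := by
    simp only [hQdef]
    rw [ip_sum_right]
    refine Finset.sum_eq_zero fun m _ => ?_
    rw [ip_sum_right]
    have inner : ∀ i : Fin d, ∑ a, ∑ b, (starRingEnd ℂ) (Em a b) *
        (B m i a * (starRingEnd ℂ) (B m i b)) = 1/(d:ℂ) := by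
      intro i
      simp only [hEdef, apply_ite (starRingEnd ℂ), map_zero, map_div₀, _root_.map_one,
        map_natCast, ite_mul, zero_mul, Finset.sum_ite_eq, Finset.mem_univ, if_true]
      calc ∑ a, 1/(d:ℂ) * (B m i a * (starRingEnd ℂ) (B m i a))
          = 1/(d:ℂ) * ∑ a, B m i a * (starRingEnd ℂ) (B m i a) := by rw [Finset.mul_sum]
        _ = 1/(d:ℂ) := by rw [htrace m i, mul_one]
    calc ∑ i, ∑ a, ∑ b, (starRingEnd ℂ) (Em a b) *
          (((c m i : ℝ):ℂ) * (B m i a * (starRingEnd ℂ) (B m i b)))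
        = ∑ i, ((c m i : ℝ):ℂ) * (1/(d:ℂ)) := by
          refine Finset.sum_congr rfl fun i _ => ?_
          rw [ip_const_right, inner]
      _ = 0 := by
          rw [← Finset.sum_mul]
          rw [show (∑ i, ((c m i : ℝ):ℂ)) = ((∑ i, c m i : ℝ) : ℂ) by push_cast; rfl]
          rw [hc_sum m]
          simp
  have hIPQE : ∑ a, ∑ b, (starRingEnd ℂ) (Qm a b) * Em a b = 0 := by
    rw [ip_conj, hIPEQ]
    simp
  have hIPPP : ∀ m i n j, ∑ a, ∑ b, (starRingEnd ℂ) (B m i a * (starRingEnd ℂ) (B m i b)) *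
      (B n j a * (starRingEnd ℂ) (B n j b))
      = ((Complex.normSq (star (B m i) ⬝ᵥ B n j) : ℝ) : ℂ) := by
    intro m i n j
    rw [ip_outer (B m i) (B m i) (B n j) (B n j)]
    have h1 : (∑ a, (starRingEnd ℂ) (B m i a) * B n j a) = star (B m i) ⬝ᵥ B n j := by
      simp [dotProduct, Pi.star_apply, RCLike.star_def]
    rw [h1, Complex.mul_conj]
  have hIPQQ : ∑ a, ∑ b, (starRingEnd ℂ) (Qm a b) * Qm a b
      = ((∑ m, ∑ i, c m i ^ 2 : ℝ) : ℂ) := by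
    simp only [hQdef]
    rw [ip_sum_left]
    have hstep : ∀ m : Fin N, ∑ a, ∑ b,
        (starRingEnd ℂ) (∑ i, ((c m i : ℝ):ℂ) * (B m i a * (starRingEnd ℂ) (B m i b))) *
          (∑ n, ∑ j, ((c n j : ℝ):ℂ) * (B n j a * (starRingEnd ℂ) (B n j b)))
        = ∑ n, ∑ i, ∑ j, ((c m i : ℝ):ℂ) * (((c n j : ℝ):ℂ) *
            ((Complex.normSq (star (B m i) ⬝ᵥ B n j) : ℝ) : ℂ)) := by
      intro m
      rw [ip_sum_left]
      rw [show (∑ i, ∑ a, ∑ b, (starRingEnd ℂ) (((c m i : ℝ):ℂ) *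
            (B m i a * (starRingEnd ℂ) (B m i b))) *
            (∑ n, ∑ j, ((c n j : ℝ):ℂ) * (B n j a * (starRingEnd ℂ) (B n j b))))
          = ∑ i, ∑ n, ∑ j, ((c m i : ℝ):ℂ) * (((c n j : ℝ):ℂ) *
            ((Complex.normSq (star (B m i) ⬝ᵥ B n j) : ℝ) : ℂ)) from
        Finset.sum_congr rfl fun i _ => by
          rw [ip_const_left, ip_sum_right, Finset.mul_sum]
          refine Finset.sum_congr rfl fun n _ => ?_
          rw [ip_sum_right, Finset.mul_sum]
          refine Finset.sum_congr rfl fun j _ => ?_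
          rw [ip_const_right, hIPPP]]
      exact Finset.sum_comm
    simp only [hstep]
    have hmn : ∀ m n : Fin N, (∑ i, ∑ j, ((c m i : ℝ):ℂ) * (((c n j : ℝ):ℂ) *
        ((Complex.normSq (star (B m i) ⬝ᵥ B n j) : ℝ) : ℂ)))
        = if n = m then ((∑ i, c m i ^ 2 : ℝ) : ℂ) else 0 := by
      intro m n
      by_cases h : n = m
      · subst h
        have hns : ∀ i j : Fin d, Complex.normSq (star (B n i) ⬝ᵥ B n j)
            = if i = j then 1 else 0 := by
          intro i j
          rw [hortho n i j]
          by_cases hij : i = j <;> simp [hij]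
        simp only [hns, if_true]
        push_cast
        refine (Finset.sum_congr rfl fun i _ => ?_)
        rw [show (∑ j, ((c n i : ℝ):ℂ) * (((c n j : ℝ):ℂ) *
            ((((if i = j then (1:ℝ) else 0)) : ℝ) : ℂ)))
          = ∑ j, if i = j then ((c n i : ℝ):ℂ) * ((c n j : ℝ):ℂ) else 0 from
          Finset.sum_congr rfl fun j _ => by by_cases hij : i = j <;> simp [hij]]
        rw [Finset.sum_ite_eq Finset.univ i fun j => ((c n i : ℝ):ℂ) * ((c n j : ℝ):ℂ)]
        simp [sq]
      · have hns : ∀ i j : Fin d, Complex.normSq (star (B m i) ⬝ᵥ B n j) = 1 / d := by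
          intro i j
          rw [← Complex.sq_norm]
          exact hmub m n (fun hh => h hh.symm) i j
        simp only [hns]
        rw [show (∑ i, ∑ j, ((c m i : ℝ):ℂ) * (((c n j : ℝ):ℂ) * (((1:ℝ)/d : ℝ) : ℂ)))
            = ((∑ i, ∑ j, c m i * (c n j * (1/d)) : ℝ) : ℂ) by push_cast; rfl]
        rw [show (∑ i, ∑ j, c m i * (c n j * (1/(d:ℝ))))
            = (∑ i, c m i) * ((∑ j, c n j) * (1/(d:ℝ))) by
          rw [Finset.sum_mul]
          exact Finset.sum_congr rfl fun i _ => by rw [← Finset.mul_sum, ← Finset.sum_mul]]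
        rw [hc_sum m]
        simp [h]
    rw [show (∑ m, ∑ n, ∑ i, ∑ j, ((c m i : ℝ):ℂ) * (((c n j : ℝ):ℂ) *
        ((Complex.normSq (star (B m i) ⬝ᵥ B n j) : ℝ) : ℂ)))
        = ∑ m, ∑ n, (if n = m then ((∑ i, c m i ^ 2 : ℝ) : ℂ) else 0) from
      Finset.sum_congr rfl fun m _ => Finset.sum_congr rfl fun n _ => hmn m n]
    push_cast
    refine Finset.sum_congr rfl fun m _ => ?_
    rw [Finset.sum_ite_eq' Finset.univ m fun n : Fin N => ∑ x, ((c m x : ℝ) : ℂ) ^ 2]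
    simp
  -- expansion of ‖ρ - I/d - Q‖²
  set Mm : Fin d → Fin d → ℂ := fun a b => ρm a b - Em a b - Qm a b with hMdef
  have hstep1 : ∀ a b, (starRingEnd ℂ) (Mm a b) * Mm a b =
      (starRingEnd ℂ) (ρm a b) * ρm a b - (starRingEnd ℂ) (ρm a b) * Em a b
      - (starRingEnd ℂ) (ρm a b) * Qm a b - (starRingEnd ℂ) (Em a b) * ρm a b
      + (starRingEnd ℂ) (Em a b) * Em a b + (starRingEnd ℂ) (Em a b) * Qm a b
      - (starRingEnd ℂ) (Qm a b) * ρm a b + (starRingEnd ℂ) (Qm a b) * Em a b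
      + (starRingEnd ℂ) (Qm a b) * Qm a b := by
    intro a b
    simp only [hMdef, map_sub]
    ring
  have hCP : ∑ m, ∑ i, c m i * p m i = ∑ m, ∑ i, c m i ^ 2 := by
    refine Finset.sum_congr rfl fun m _ => ?_
    have h1 : ∑ i, c m i * p m i = ∑ i, (c m i ^ 2 + c m i * (1/(d:ℝ))) :=
      Finset.sum_congr rfl fun i _ => by
        show (p m i - 1/(d:ℝ)) * p m i
          = (p m i - 1/(d:ℝ)) ^ 2 + (p m i - 1/(d:ℝ)) * (1/(d:ℝ))
        ring
    rw [h1, Finset.sum_add_distrib, ← Finset.sum_mul, hc_sum m]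
    ring
  have hG : ∑ a, ∑ b, (starRingEnd ℂ) (Mm a b) * Mm a b
      = ((1 - 1/(d:ℝ) - ∑ m, ∑ i, c m i ^ 2 : ℝ) : ℂ) := by
    calc ∑ a, ∑ b, (starRingEnd ℂ) (Mm a b) * Mm a b
        = ∑ a, ∑ b, ((starRingEnd ℂ) (ρm a b) * ρm a b - (starRingEnd ℂ) (ρm a b) * Em a b
          - (starRingEnd ℂ) (ρm a b) * Qm a b - (starRingEnd ℂ) (Em a b) * ρm a b
          + (starRingEnd ℂ) (Em a b) * Em a b + (starRingEnd ℂ) (Em a b) * Qm a b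
          - (starRingEnd ℂ) (Qm a b) * ρm a b + (starRingEnd ℂ) (Qm a b) * Em a b
          + (starRingEnd ℂ) (Qm a b) * Qm a b) := by
          exact Finset.sum_congr rfl fun a _ => Finset.sum_congr rfl fun b _ => hstep1 a b
      _ = (∑ a, ∑ b, (starRingEnd ℂ) (ρm a b) * ρm a b)
          - (∑ a, ∑ b, (starRingEnd ℂ) (ρm a b) * Em a b)
          - (∑ a, ∑ b, (starRingEnd ℂ) (ρm a b) * Qm a b)
          - (∑ a, ∑ b, (starRingEnd ℂ) (Em a b) * ρm a b)
          + (∑ a, ∑ b, (starRingEnd ℂ) (Em a b) * Em a b)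
          + (∑ a, ∑ b, (starRingEnd ℂ) (Em a b) * Qm a b)
          - (∑ a, ∑ b, (starRingEnd ℂ) (Qm a b) * ρm a b)
          + (∑ a, ∑ b, (starRingEnd ℂ) (Qm a b) * Em a b)
          + (∑ a, ∑ b, (starRingEnd ℂ) (Qm a b) * Qm a b) := by
          simp only [Finset.sum_add_distrib, Finset.sum_sub_distrib]
      _ = ((1 - 1/(d:ℝ) - ∑ m, ∑ i, c m i ^ 2 : ℝ) : ℂ) := by
          rw [hIPrr, hIPrE, hIPrQ, hIPEr, hIPEE, hIPEQ, hIPQr, hIPQE, hIPQQ, hCP]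
          push_cast
          field_simp
          ring
  have hpos : (0:ℝ) ≤ 1 - 1/(d:ℝ) - ∑ m, ∑ i, c m i ^ 2 := by
    have h0 : (0:ℝ) ≤ ∑ a, ∑ b, Complex.normSq (Mm a b) :=
      Finset.sum_nonneg fun a _ => Finset.sum_nonneg fun b _ => Complex.normSq_nonneg _
    have h1 : ((∑ a, ∑ b, Complex.normSq (Mm a b) : ℝ) : ℂ)
        = ∑ a, ∑ b, (starRingEnd ℂ) (Mm a b) * Mm a b := by
      push_cast
      exact Finset.sum_congr rfl fun a _ => Finset.sum_congr rfl fun b _ =>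
        (Complex.normSq_eq_conj_mul_self (z := Mm a b)).symm ▸ rfl
    have h2 : (∑ a, ∑ b, Complex.normSq (Mm a b)) = 1 - 1/(d:ℝ) - ∑ m, ∑ i, c m i ^ 2 := by
      have h3 := h1.trans hG
      exact_mod_cast h3
    rw [h2] at h0
    exact h0
  -- back to probabilities
  have hc2 : ∀ m, ∑ i, c m i ^ 2 = (∑ i, p m i ^ 2) - 1/(d:ℝ) := by
    intro m
    have h1 : ∑ i, c m i ^ 2
        = ∑ i, (p m i ^ 2 - (2/(d:ℝ)) * p m i + (1/(d:ℝ)) ^ 2) :=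
      Finset.sum_congr rfl fun i _ => by
        show (p m i - 1/(d:ℝ)) ^ 2 = _
        ring
    rw [h1, Finset.sum_add_distrib, Finset.sum_sub_distrib, ← Finset.mul_sum, hp_sum m,
      Finset.sum_const, Finset.card_univ, Fintype.card_fin, nsmul_eq_mul]
    field_simp
    ring
  have hSsum : ∑ m, ∑ i, p m i ^ 2 ≤ 1 - 1/(d:ℝ) + N/(d:ℝ) := by
    have h3 : ∑ m, ∑ i, c m i ^ 2 = (∑ m, ∑ i, p m i ^ 2) - N/(d:ℝ) := by
      rw [show (∑ m, ∑ i, c m i ^ 2) = ∑ m, ((∑ i, p m i ^ 2) - 1/(d:ℝ)) from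
        Finset.sum_congr rfl fun m _ => hc2 m]
      rw [Finset.sum_sub_distrib, Finset.sum_const, Finset.card_univ, Fintype.card_fin,
        nsmul_eq_mul]
      ring
    linarith [hpos, h3.symm.le, h3.le]
  -- conclusion
  show (1 - 1/(N:ℝ)) * (1 - 1/(d:ℝ)) ≤ (1/(N:ℝ)) * ∑ m, (1 - ∑ i, p m i ^ 2)
  have hgoalsum : ∑ m, (1 - ∑ i, p m i ^ 2) = (N:ℝ) - ∑ m, ∑ i, p m i ^ 2 := by
    rw [Finset.sum_sub_distrib, Finset.sum_const, Finset.card_univ, Fintype.card_fin,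
      nsmul_eq_mul]
    ring
  rw [hgoalsum, ← sub_nonneg]
  have hkey : (1/(N:ℝ)) * ((N:ℝ) - ∑ m, ∑ i, p m i ^ 2) - (1 - 1/(N:ℝ)) * (1 - 1/(d:ℝ))
      = (1/(N:ℝ)) * ((1 - 1/(d:ℝ) + N/(d:ℝ)) - ∑ m, ∑ i, p m i ^ 2) := by
    field_simp
    ring
  rw [hkey]
  apply mul_nonneg
  · positivity
  · linarith [hSsum]
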